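/- Theorem 3.2 (finite case): If the set K of keys is finite, then the axiom system AX_fin is sound and complete with respect to the open semantics of LLNC: a formula φ is provable in AX_fin if and only if φ is o-valid. -/

import Mathlib

/-- Principal expressions over keys `K`, global names `G`, local names `N`. -/
inductive PExp (K G N : Type*) where
  | key : K → PExp K G N
  | glob : G → PExp K G N
  | loc : N → PExp K G N
  | s : PExp K G N → PExp K G N → PExp K G N

/-- Formulas of LLNC. -/
inductive Fml (K G N : Type*) where
  | bdto : PExp K G N → PExp K G N → Fml K G N
  | cert : K → Fml K G N → Fml K G N
  | not : Fml K G N → Fml K G N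
  | and : Fml K G N → Fml K G N → Fml K G N

/-- A world: an interpretation of global names and an assignment of
certificates to keys, with only finitely many certificates issued. -/
structure World (K G N : Type*) where
  beta : G → Set K
  certs : K → Set (Fml K G N)
  finite_certs : (⋃ k, certs k).Finite

variable {K G N : Type*}

/-- The interpretation of a principal expression relative to a world, a
local name assignment, and a key. -/
def interp (w : World K G N) (l : K → N → Set K) : PExp K G N → K → Set K
  | .key k', _ => {k'}
  | .glob g, _ => w.beta g
  | .loc n, k => l k n
  | .s p q, k => ⋃ k' ∈ interp w l p k, interp w l q k'

/-- Satisfaction of a formula at a world, local name assignment, and key. -/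
def Sat (w : World K G N) (l : K → N → Set K) (k : K) : Fml K G N → Prop
  | .bdto p q => interp w l q k ⊆ interp w l p k
  | .cert k' φ => φ ∈ w.certs k'
  | .not φ => ¬ Sat w l k φ
  | .and φ ψ => Sat w l k φ ∧ Sat w l k ψ

/-- A local name assignment is consistent with a world if every issued
binding certificate holds at the issuer. -/
def Consistent (w : World K G N) (l : K → N → Set K) : Prop :=
  ∀ (k : K) (n : N) (p : PExp K G N),
    Fml.bdto (.loc n) p ∈ w.certs k → Sat w l k (.bdto (.loc n) p)

/-- `lw` is the (unique) minimal local name assignment consistent with `w`. -/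
def IsMinConsistent (w : World K G N) (lw : K → N → Set K) : Prop :=
  Consistent w lw ∧ ∀ l, Consistent w l → ∀ (k : K) (n : N), lw k n ⊆ l k n

/-- Open-semantics satisfaction: satisfaction with a consistent assignment. -/
def OSat (w : World K G N) (l : K → N → Set K) (k : K) (φ : Fml K G N) : Prop :=
  Sat w l k φ ∧ Consistent w l

/-- `φ` is o-satisfiable. -/
def OSatisfiable (φ : Fml K G N) : Prop :=
  ∃ (w : World K G N) (l : K → N → Set K) (k : K), OSat w l k φ

/-- `φ` is o-valid: no triple satisfies `¬φ` under the open semantics. -/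
def OValid (φ : Fml K G N) : Prop :=
  ¬ ∃ (w : World K G N) (l : K → N → Set K) (k : K), OSat w l k (.not φ)

/-- `φ` is c-satisfiable: some world and key satisfy it under the minimal
consistent local name assignment of the world. -/
def CSatisfiable (φ : Fml K G N) : Prop :=
  ∃ (w : World K G N) (k : K) (lw : K → N → Set K), IsMinConsistent w lw ∧ Sat w lw k φ

/-- `φ` is c-valid: every world and key satisfy it under the minimal
consistent local name assignment of the world. -/
def CValid (φ : Fml K G N) : Prop :=
  ∀ (w : World K G N) (k : K) (lw : K → N → Set K), IsMinConsistent w lw → Sat w lw k φ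

/-- Material implication, as a classical abbreviation. -/
def Fml.imp (φ ψ : Fml K G N) : Fml K G N := .not (.and φ (.not ψ))

/-- Disjunction, as a classical abbreviation. -/
def Fml.or (φ ψ : Fml K G N) : Fml K G N := .not (.and (.not φ) (.not ψ))

/-- Biconditional, as a classical abbreviation. -/
def Fml.iff (φ ψ : Fml K G N) : Fml K G N := .and (φ.imp ψ) (ψ.imp φ)

/-- Boolean evaluation of a formula treating `▷`- and `cert`-formulas as atoms. -/
def evalB (v : Fml K G N → Bool) : Fml K G N → Bool
  | .not φ => !(evalB v φ)
  | .and φ ψ => evalB v φ && evalB v ψ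
  | φ => v φ

/-- `φ` is an instance of a propositional tautology. -/
def Tautology (φ : Fml K G N) : Prop := ∀ v : Fml K G N → Bool, evalB v φ = true

/-- Global identifiers: keys and global names. -/
def IsGlobalId : PExp K G N → Prop
  | .key _ => True
  | .glob _ => True
  | _ => False

/-- The axiom system `AX_inf`. -/
inductive PrvInf : Fml K G N → Prop
  | taut {φ : Fml K G N} : Tautology φ → PrvInf φ
  | refl (p : PExp K G N) : PrvInf (.bdto p p)
  | trans (p q r : PExp K G N) :
      PrvInf ((Fml.bdto p q).imp ((Fml.bdto q r).imp (.bdto p r)))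
  | leftMono (p q r : PExp K G N) :
      PrvInf ((Fml.bdto p q).imp (.bdto (p.s r) (q.s r)))
  | assoc₁ (p q r : PExp K G N) : PrvInf (.bdto ((p.s q).s r) (p.s (q.s r)))
  | assoc₂ (p q r : PExp K G N) : PrvInf (.bdto (p.s (q.s r)) ((p.s q).s r))
  | keyGlob (k : K) (g : PExp K G N) (hg : IsGlobalId g) :
      PrvInf (.bdto ((PExp.key k).s g) g)
  | glob (p : PExp K G N) (k : K) (g : PExp K G N) (hg : IsGlobalId g) :
      PrvInf ((Fml.bdto (p.s (.key k)) (.key k)).imp (.bdto (p.s g) g))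
  | convGlob (p g : PExp K G N) (hg : IsGlobalId g) : PrvInf (.bdto g (p.s g))
  | keyLink (k : K) (n : N) (r : PExp K G N) :
      PrvInf ((Fml.cert k (.bdto (.loc n) r)).imp
        (.bdto ((PExp.key k).s (.loc n)) ((PExp.key k).s r)))
  | nonempA (p : PExp K G N) (k₁ k : K) :
      PrvInf ((Fml.bdto p (.key k₁)).imp (.bdto (p.s (.key k)) (.key k)))
  | nonempB (p q : PExp K G N) (k : K) :
      PrvInf ((Fml.not (.bdto p q)).imp (.bdto (q.s (.key k)) (.key k)))
  | nonempC (p q : PExp K G N) (k₁ k : K) :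
      PrvInf ((Fml.bdto (p.s q) (.key k₁)).imp (.bdto (p.s (.key k)) (.key k)))
  | nonempD (p : PExp K G N) (k k' : K) :
      PrvInf ((Fml.and (.bdto (p.s (.key k)) (.key k)) (.bdto (.key k') p)).imp
        (.bdto p (.key k')))
  | keyDist (k₁ k₂ : K) (hne : k₁ ≠ k₂) : PrvInf (.not (.bdto (.key k₁) (.key k₂)))
  | mp {φ ψ : Fml K G N} : PrvInf φ → PrvInf (φ.imp ψ) → PrvInf ψ

/-- Disjunction of the nonempty list `φ :: l` of formulas. -/
def bigOr (φ : Fml K G N) : List (Fml K G N) → Fml K G N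
  | [] => φ
  | ψ :: rest => φ.or (bigOr ψ rest)

/-- The disjunction `⋁_{k ∈ K} f k`, where `k₀ :: L` enumerates `K`. -/
def disjOver (f : K → Fml K G N) (k₀ : K) (L : List K) : Fml K G N :=
  bigOr (f k₀) (L.map f)

/-- The axiom system `AX_fin`: `AX_inf` together with Witnesses and
Current Principal (finite disjunctions over an enumeration of `K`). -/
inductive PrvFin : Fml K G N → Prop
  | taut {φ : Fml K G N} : Tautology φ → PrvFin φ
  | refl (p : PExp K G N) : PrvFin (.bdto p p)
  | trans (p q r : PExp K G N) :
      PrvFin ((Fml.bdto p q).imp ((Fml.bdto q r).imp (.bdto p r)))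
  | leftMono (p q r : PExp K G N) :
      PrvFin ((Fml.bdto p q).imp (.bdto (p.s r) (q.s r)))
  | assoc₁ (p q r : PExp K G N) : PrvFin (.bdto ((p.s q).s r) (p.s (q.s r)))
  | assoc₂ (p q r : PExp K G N) : PrvFin (.bdto (p.s (q.s r)) ((p.s q).s r))
  | keyGlob (k : K) (g : PExp K G N) (hg : IsGlobalId g) :
      PrvFin (.bdto ((PExp.key k).s g) g)
  | glob (p : PExp K G N) (k : K) (g : PExp K G N) (hg : IsGlobalId g) :
      PrvFin ((Fml.bdto (p.s (.key k)) (.key k)).imp (.bdto (p.s g) g))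
  | convGlob (p g : PExp K G N) (hg : IsGlobalId g) : PrvFin (.bdto g (p.s g))
  | keyLink (k : K) (n : N) (r : PExp K G N) :
      PrvFin ((Fml.cert k (.bdto (.loc n) r)).imp
        (.bdto ((PExp.key k).s (.loc n)) ((PExp.key k).s r)))
  | nonempA (p : PExp K G N) (k₁ k : K) :
      PrvFin ((Fml.bdto p (.key k₁)).imp (.bdto (p.s (.key k)) (.key k)))
  | nonempB (p q : PExp K G N) (k : K) :
      PrvFin ((Fml.not (.bdto p q)).imp (.bdto (q.s (.key k)) (.key k)))
  | nonempC (p q : PExp K G N) (k₁ k : K) :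
      PrvFin ((Fml.bdto (p.s q) (.key k₁)).imp (.bdto (p.s (.key k)) (.key k)))
  | nonempD (p : PExp K G N) (k k' : K) :
      PrvFin ((Fml.and (.bdto (p.s (.key k)) (.key k)) (.bdto (.key k') p)).imp
        (.bdto p (.key k')))
  | keyDist (k₁ k₂ : K) (hne : k₁ ≠ k₂) : PrvFin (.not (.bdto (.key k₁) (.key k₂)))
  | witnesses₁ (p q : PExp K G N) (k₀ : K) (L : List K)
      (hnd : (k₀ :: L).Nodup) (hall : ∀ k : K, k ∈ k₀ :: L) :
      PrvFin ((Fml.not (.bdto p q)).imp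
        (disjOver (fun k => Fml.and (.not (.bdto p (.key k))) (.bdto q (.key k))) k₀ L))
  | witnesses₂ (p q : PExp K G N) (k₁ : K) (k₀ : K) (L : List K)
      (hnd : (k₀ :: L).Nodup) (hall : ∀ k : K, k ∈ k₀ :: L) :
      PrvFin ((Fml.bdto (p.s q) (.key k₁)).imp
        (disjOver (fun k => Fml.and (.bdto p (.key k))
          (.bdto ((PExp.key k).s q) (.key k₁))) k₀ L))
  | currentPrincipal (nsel : K → N) (lsel : K → K) (k₀ : K) (L : List K)
      (hnd : (k₀ :: L).Nodup) (hall : ∀ k : K, k ∈ k₀ :: L) :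
      PrvFin (disjOver (fun k => Fml.iff (.bdto (.loc (nsel k)) (.key (lsel k)))
        (.bdto ((PExp.key k).s (.loc (nsel k))) (.key (lsel k)))) k₀ L)
  | mp {φ ψ : Fml K G N} : PrvFin φ → PrvFin (φ.imp ψ) → PrvFin ψ
section Toolkit
open Classical
variable {K G N : Type*}

@[simp] lemma evalB_bdto (v : Fml K G N → Bool) (p q) : evalB v (.bdto p q) = v (.bdto p q) := rfl
@[simp] lemma evalB_cert (v : Fml K G N → Bool) (k ψ) : evalB v (.cert k ψ) = v (.cert k ψ) := rfl
@[simp] lemma evalB_not (v : Fml K G N → Bool) (ψ) : evalB v (.not ψ) = !(evalB v ψ) := rfl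
@[simp] lemma evalB_and (v : Fml K G N → Bool) (ψ χ) : evalB v (.and ψ χ) = (evalB v ψ && evalB v χ) := rfl

@[simp] lemma sat_bdto (w : World K G N) (l k p q) :
    Sat w l k (.bdto p q) ↔ interp w l q k ⊆ interp w l p k := Iff.rfl
@[simp] lemma sat_cert (w : World K G N) (l k k' ψ) :
    Sat w l k (.cert k' ψ) ↔ ψ ∈ w.certs k' := Iff.rfl
@[simp] lemma sat_not (w : World K G N) (l k ψ) :
    Sat w l k (.not ψ) ↔ ¬ Sat w l k ψ := Iff.rfl
@[simp] lemma sat_and (w : World K G N) (l k ψ χ) :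
    Sat w l k (.and ψ χ) ↔ (Sat w l k ψ ∧ Sat w l k χ) := Iff.rfl
@[simp] lemma sat_imp (w : World K G N) (l k ψ χ) :
    Sat w l k (ψ.imp χ) ↔ (Sat w l k ψ → Sat w l k χ) := by
  simp [Fml.imp]
  try tauto
@[simp] lemma sat_or (w : World K G N) (l k ψ χ) :
    Sat w l k (ψ.or χ) ↔ (Sat w l k ψ ∨ Sat w l k χ) := by
  simp [Fml.or]
  try tauto
@[simp] lemma sat_iff (w : World K G N) (l k ψ χ) :
    Sat w l k (ψ.iff χ) ↔ (Sat w l k ψ ↔ Sat w l k χ) := by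
  simp [Fml.iff]
  try tauto

lemma taut_K' (φ ψ : Fml K G N) : Tautology (φ.imp (ψ.imp φ)) := by
  intro v
  simp only [Fml.imp, evalB_not, evalB_and]
  cases evalB v φ <;> cases evalB v ψ <;> rfl
end Toolkit
section Hilbert
open Classical
variable {K G N : Type*}

/-- Tautology instances: generic finisher. -/
lemma taut_I (a : Fml K G N) : Tautology (a.imp a) := by
  intro v; simp only [Fml.imp, evalB_not, evalB_and]
  cases evalB v a <;> rfl

lemma taut_mono (x y a : Fml K G N) :
    Tautology ((x.imp y).imp ((a.imp x).imp (a.imp y))) := by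
  intro v; simp only [Fml.imp, evalB_not, evalB_and]
  cases evalB v x <;> cases evalB v y <;> cases evalB v a <;> rfl

lemma taut_exch (a b x y : Fml K G N) :
    Tautology (((a.imp x).imp y).imp ((a.imp (b.imp x)).imp (b.imp y))) := by
  intro v; simp only [Fml.imp, evalB_not, evalB_and]
  cases evalB v a <;> cases evalB v b <;> cases evalB v x <;> cases evalB v y <;> rfl

lemma taut_S (x y z a : Fml K G N) :
    Tautology ((x.imp (y.imp z)).imp ((a.imp x).imp ((a.imp y).imp (a.imp z)))) := by
  intro v; simp only [Fml.imp, evalB_not, evalB_and]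
  cases evalB v x <;> cases evalB v y <;> cases evalB v z <;> cases evalB v a <;> rfl

lemma taut_contr (a b : Fml K G N) :
    Tautology ((a.imp (a.imp b)).imp (a.imp b)) := by
  intro v; simp only [Fml.imp, evalB_not, evalB_and]
  cases evalB v a <;> cases evalB v b <;> rfl

lemma taut_swap (a b c : Fml K G N) :
    Tautology ((a.imp (b.imp c)).imp (b.imp (a.imp c))) := by
  intro v; simp only [Fml.imp, evalB_not, evalB_and]
  cases evalB v a <;> cases evalB v b <;> cases evalB v c <;> rfl

lemma taut_explode (a b : Fml K G N) :
    Tautology (a.imp ((Fml.not a).imp b)) := by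
  intro v; simp only [Fml.imp, evalB_not, evalB_and]
  cases evalB v a <;> cases evalB v b <;> rfl

lemma taut_negimp (a f : Fml K G N) :
    Tautology ((((Fml.not a).imp f)).imp ((Fml.not f).imp a)) := by
  intro v; simp only [Fml.imp, evalB_not, evalB_and]
  cases evalB v a <;> cases evalB v f <;> rfl

lemma taut_andl (a b : Fml K G N) : Tautology ((Fml.and a b).imp a) := by
  intro v; simp only [Fml.imp, evalB_not, evalB_and]
  cases evalB v a <;> cases evalB v b <;> rfl

lemma taut_andr (a b : Fml K G N) : Tautology ((Fml.and a b).imp b) := by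
  intro v; simp only [Fml.imp, evalB_not, evalB_and]
  cases evalB v a <;> cases evalB v b <;> rfl

lemma taut_andi (a b : Fml K G N) : Tautology (a.imp (b.imp (Fml.and a b))) := by
  intro v; simp only [Fml.imp, evalB_not, evalB_and]
  cases evalB v a <;> cases evalB v b <;> rfl

lemma taut_dne (a : Fml K G N) : Tautology ((Fml.not (Fml.not a)).imp a) := by
  intro v; simp only [Fml.imp, evalB_not, evalB_and]
  cases evalB v a <;> rfl

lemma taut_dni (a : Fml K G N) : Tautology (a.imp (Fml.not (Fml.not a))) := by
  intro v; simp only [Fml.imp, evalB_not, evalB_and]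
  cases evalB v a <;> rfl

lemma taut_orI1 (a b : Fml K G N) : Tautology (a.imp (Fml.or a b)) := by
  intro v; simp only [Fml.imp, Fml.or, evalB_not, evalB_and]
  cases evalB v a <;> cases evalB v b <;> rfl

lemma taut_orI2 (a b : Fml K G N) : Tautology (b.imp (Fml.or a b)) := by
  intro v; simp only [Fml.imp, Fml.or, evalB_not, evalB_and]
  cases evalB v a <;> cases evalB v b <;> rfl

/-- excluded-middle-ish: ((¬a).imp b).imp (a.or b)?  We'll need: from or-membership get a disjunct. -/
lemma taut_orE (a b c : Fml K G N) :
    Tautology ((a.imp c).imp ((b.imp c).imp ((Fml.or a b).imp c))) := by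
  intro v; simp only [Fml.imp, Fml.or, evalB_not, evalB_and]
  cases evalB v a <;> cases evalB v b <;> cases evalB v c <;> rfl

-- Hilbert toolkit
lemma PrvFin.mp1 {φ ψ : Fml K G N} (h : PrvFin φ) (t : Tautology (φ.imp ψ)) : PrvFin ψ :=
  h.mp (PrvFin.taut t)

lemma PrvFin.mp2 {φ χ ψ : Fml K G N} (h1 : PrvFin φ) (h2 : PrvFin χ)
    (t : Tautology (φ.imp (χ.imp ψ))) : PrvFin ψ :=
  h2.mp (h1.mp (PrvFin.taut t))

lemma prv_mono_cons {x y : Fml K G N} (a : Fml K G N) (h : PrvFin (x.imp y)) :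
    PrvFin ((a.imp x).imp (a.imp y)) :=
  h.mp1 (taut_mono x y a)

def impList : List (Fml K G N) → Fml K G N → Fml K G N
  | [], ψ => ψ
  | χ :: L, ψ => χ.imp (impList L ψ)

lemma impList_append (L₁ L₂ : List (Fml K G N)) (ψ : Fml K G N) :
    impList (L₁ ++ L₂) ψ = impList L₁ (impList L₂ ψ) := by
  induction L₁ with
  | nil => rfl
  | cons a L ih => simp [impList, ih]

lemma prv_impList_mono {x y : Fml K G N} (L : List (Fml K G N)) (h : PrvFin (x.imp y)) :
    PrvFin ((impList L x).imp (impList L y)) := by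
  induction L with
  | nil => exact h
  | cons a L ih => exact prv_mono_cons a ih

lemma prv_impList_weaken_cons {χ : Fml K G N} (a : Fml K G N) {L : List (Fml K G N)}
    (h : PrvFin (impList L χ)) : PrvFin (impList (a :: L) χ) :=
  h.mp1 (taut_K' _ a)

lemma prv_impList_weaken_left {χ : Fml K G N} (L₁ : List (Fml K G N)) {L₂ : List (Fml K G N)}
    (h : PrvFin (impList L₂ χ)) : PrvFin (impList (L₁ ++ L₂) χ) := by
  induction L₁ with
  | nil => exact h
  | cons a L ih => exact prv_impList_weaken_cons a ih

lemma prv_weaken_obj (χ : Fml K G N) (L : List (Fml K G N)) :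
    PrvFin (χ.imp (impList L χ)) := by
  induction L with
  | nil => exact PrvFin.taut (taut_I χ)
  | cons a L ih =>
      exact ih.mp1 (by
        intro v; simp only [Fml.imp, impList, evalB_not, evalB_and]
        cases evalB v χ <;> cases evalB v a <;> cases evalB v (impList L χ) <;> rfl)

lemma prv_impList_weaken_right {χ : Fml K G N} {L₁ : List (Fml K G N)} (L₂ : List (Fml K G N))
    (h : PrvFin (impList L₁ χ)) : PrvFin (impList (L₁ ++ L₂) χ) := by
  rw [impList_append]
  exact h.mp (prv_impList_mono L₁ (prv_weaken_obj χ L₂))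

lemma prv_impList_mp_obj (L : List (Fml K G N)) (φ ψ : Fml K G N) :
    PrvFin ((impList L (φ.imp ψ)).imp ((impList L φ).imp (impList L ψ))) := by
  induction L with
  | nil => exact PrvFin.taut (taut_I _)
  | cons a L ih => exact ih.mp1 (taut_S _ _ _ a)

lemma prv_impList_mp {L : List (Fml K G N)} {φ ψ : Fml K G N}
    (h1 : PrvFin (impList L (φ.imp ψ))) (h2 : PrvFin (impList L φ)) :
    PrvFin (impList L ψ) :=
  h2.mp (h1.mp (prv_impList_mp_obj L φ ψ))

lemma prv_exch_obj (a : Fml K G N) (L : List (Fml K G N)) (χ : Fml K G N) :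
    PrvFin ((a.imp (impList L χ)).imp (impList L (a.imp χ))) := by
  induction L with
  | nil => exact PrvFin.taut (taut_I _)
  | cons b L ih => exact ih.mp1 (taut_exch a b _ _)

end Hilbert
section Deduction
open Classical
variable {K G N : Type*}

/-- Derivability from a set of hypotheses. -/
def PrvFrom (T : Set (Fml K G N)) (ψ : Fml K G N) : Prop :=
  ∃ L : List (Fml K G N), (∀ χ ∈ L, χ ∈ T) ∧ PrvFin (impList L ψ)

lemma prvFrom_of_prv {T : Set (Fml K G N)} {ψ : Fml K G N} (h : PrvFin ψ) : PrvFrom T ψ :=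
  ⟨[], by simp, h⟩

lemma prvFrom_of_mem {T : Set (Fml K G N)} {ψ : Fml K G N} (h : ψ ∈ T) : PrvFrom T ψ :=
  ⟨[ψ], by simpa using h, PrvFin.taut (taut_I ψ)⟩

lemma prvFrom_mono {T T' : Set (Fml K G N)} {ψ : Fml K G N} (hT : T ⊆ T')
    (h : PrvFrom T ψ) : PrvFrom T' ψ := by
  obtain ⟨L, hL, hp⟩ := h
  exact ⟨L, fun χ hχ => hT (hL χ hχ), hp⟩

lemma prvFrom_mp {T : Set (Fml K G N)} {φ ψ : Fml K G N}
    (h1 : PrvFrom T φ) (h2 : PrvFrom T (φ.imp ψ)) : PrvFrom T ψ := by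
  obtain ⟨L₁, hL₁, hp₁⟩ := h1
  obtain ⟨L₂, hL₂, hp₂⟩ := h2
  refine ⟨L₁ ++ L₂, ?_, ?_⟩
  · intro χ hχ
    rcases List.mem_append.1 hχ with h | h
    · exact hL₁ χ h
    · exact hL₂ χ h
  · exact prv_impList_mp (prv_impList_weaken_left L₁ hp₂) (prv_impList_weaken_right L₂ hp₁)

lemma prvFrom_mp1 {T : Set (Fml K G N)} {φ ψ : Fml K G N}
    (h1 : PrvFrom T φ) (t : Tautology (φ.imp ψ)) : PrvFrom T ψ :=
  prvFrom_mp h1 (prvFrom_of_prv (PrvFin.taut t))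

lemma prvFrom_mp2 {T : Set (Fml K G N)} {φ χ ψ : Fml K G N}
    (h1 : PrvFrom T φ) (h2 : PrvFrom T χ) (t : Tautology (φ.imp (χ.imp ψ))) : PrvFrom T ψ :=
  prvFrom_mp h2 (prvFrom_mp1 h1 t)

lemma deduction_aux {T : Set (Fml K G N)} {ψ : Fml K G N} :
    ∀ (L : List (Fml K G N)) (χ : Fml K G N), (∀ a ∈ L, a ∈ insert ψ T) →
      PrvFin (impList L χ) →
      ∃ L', (∀ a ∈ L', a ∈ T) ∧ PrvFin (impList L' (ψ.imp χ)) := by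
  intro L
  induction L with
  | nil => exact fun χ _ hp => ⟨[], by simp, hp.mp1 (taut_K' χ ψ)⟩
  | cons a L ih =>
      intro χ hL hp
      have hp' : PrvFin (impList L (a.imp χ)) := hp.mp (prv_exch_obj a L χ)
      obtain ⟨L', hL', hq⟩ := ih (a.imp χ) (fun χ' hχ' => hL χ' (List.mem_cons_of_mem a hχ')) hp'
      rcases hL a (List.mem_cons_self) with ha | ha
      · subst ha
        exact ⟨L', hL', hq.mp (prv_impList_mono L' (PrvFin.taut (taut_contr a χ)))⟩
      · refine ⟨L' ++ [a], ?_, ?_⟩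
        · intro χ' hχ'
          rcases List.mem_append.1 hχ' with h | h
          · exact hL' χ' h
          · simpa using (List.mem_singleton.1 h ▸ ha)
        · rw [impList_append]
          exact hq.mp (prv_impList_mono L' (PrvFin.taut (taut_swap ψ a χ)))

/-- The deduction theorem. -/
lemma deduction {T : Set (Fml K G N)} {ψ χ : Fml K G N}
    (h : PrvFrom (insert ψ T) χ) : PrvFrom T (ψ.imp χ) := by
  obtain ⟨L, hL, hp⟩ := h
  obtain ⟨L', hL', hq⟩ := deduction_aux L χ hL hp
  exact ⟨L', hL', hq⟩

variable [Nonempty K]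

/-- A canonical contradictory formula. -/
noncomputable def falsum : Fml K G N :=
  .not (.bdto (.key (Classical.arbitrary K)) (.key (Classical.arbitrary K)))

lemma prv_not_falsum : PrvFin (Fml.not (falsum : Fml K G N)) :=
  (PrvFin.refl _).mp1 (taut_dni _)

/-- Consistency of a set of formulas. -/
def ConS (T : Set (Fml K G N)) : Prop := ¬ PrvFrom T falsum

lemma not_conS_of_both {T : Set (Fml K G N)} {ψ : Fml K G N}
    (h1 : PrvFrom T ψ) (h2 : PrvFrom T (.not ψ)) : ¬ ConS T := by
  intro hc
  exact hc (prvFrom_mp2 h1 h2 (taut_explode ψ falsum))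

/-- Maximal consistent set. -/
def MaxCon (Γ : Set (Fml K G N)) : Prop :=
  ConS Γ ∧ ∀ ψ, ConS (insert ψ Γ) → ψ ∈ Γ

lemma chain_list_sub {α : Type*} {c : Set (Set α)} (hchain : IsChain (· ⊆ ·) c)
    (hne : c.Nonempty) :
    ∀ L : List α, (∀ x ∈ L, x ∈ ⋃₀ c) → ∃ U ∈ c, ∀ x ∈ L, x ∈ U := by
  intro L
  induction L with
  | nil => exact fun _ => hne.imp fun U hU => ⟨hU, by simp⟩
  | cons a L ih =>
      intro hL
      obtain ⟨U, hU, hUL⟩ := ih (fun x hx => hL x (List.mem_cons_of_mem a hx))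
      obtain ⟨V, hV, haV⟩ := hL a (List.mem_cons_self)
      rcases hchain.total hU hV with huv | hvu
      · refine ⟨V, hV, fun x hx => ?_⟩
        rcases List.mem_cons.1 hx with rfl | hx
        · exact haV
        · exact huv (hUL x hx)
      · refine ⟨U, hU, fun x hx => ?_⟩
        rcases List.mem_cons.1 hx with rfl | hx
        · exact hvu haV
        · exact hUL x hx

/-- Lindenbaum's lemma. -/
lemma lindenbaum {T : Set (Fml K G N)} (h : ConS T) :
    ∃ Γ, T ⊆ Γ ∧ MaxCon Γ := by
  obtain ⟨Γ, hTΓ, hmax⟩ := zorn_subset_nonempty {U : Set (Fml K G N) | ConS U}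
    (fun c hc hchain hne => by
      refine ⟨⋃₀ c, ?_, fun s hs => Set.subset_sUnion_of_mem hs⟩
      rintro ⟨L, hL, hp⟩
      obtain ⟨U, hU, hUL⟩ := chain_list_sub hchain hne L hL
      exact hc hU ⟨L, hUL, hp⟩) T h
  refine ⟨Γ, hTΓ, hmax.prop, fun ψ hψ => ?_⟩
  have := hmax.le_of_ge hψ (Set.subset_insert ψ Γ)
  exact this (Set.mem_insert ψ Γ)

end Deduction
section MaxConProps
open Classical
variable {K G N : Type*} [Nonempty K] {Γ : Set (Fml K G N)}

namespace MaxCon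

lemma mem_of_prvFrom (h : MaxCon Γ) {ψ : Fml K G N} (hp : PrvFrom Γ ψ) : ψ ∈ Γ := by
  refine h.2 ψ (fun hf => h.1 ?_)
  exact prvFrom_mp hp (deduction hf)

lemma mem_of_prv (h : MaxCon Γ) {ψ : Fml K G N} (hp : PrvFin ψ) : ψ ∈ Γ :=
  h.mem_of_prvFrom (prvFrom_of_prv hp)

lemma mp (h : MaxCon Γ) {φ ψ : Fml K G N} (h1 : φ.imp ψ ∈ Γ) (h2 : φ ∈ Γ) : ψ ∈ Γ :=
  h.mem_of_prvFrom (prvFrom_mp (prvFrom_of_mem h2) (prvFrom_of_mem h1))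

lemma mp_prv (h : MaxCon Γ) {φ ψ : Fml K G N} (h1 : PrvFin (φ.imp ψ)) (h2 : φ ∈ Γ) : ψ ∈ Γ :=
  h.mp (h.mem_of_prv h1) h2

lemma mem_or_neg (h : MaxCon Γ) (ψ : Fml K G N) : ψ ∈ Γ ∨ (Fml.not ψ) ∈ Γ := by
  by_cases hψ : ψ ∈ Γ
  · exact Or.inl hψ
  · refine Or.inr (h.2 _ (fun hf => hψ ?_))
    have h1 : PrvFrom Γ ((Fml.not ψ).imp falsum) := deduction hf
    exact h.mem_of_prvFrom (prvFrom_mp2 h1 (prvFrom_of_prv prv_not_falsum)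
      (taut_negimp ψ falsum))

lemma not_both (h : MaxCon Γ) {ψ : Fml K G N} (h1 : ψ ∈ Γ) (h2 : (Fml.not ψ) ∈ Γ) : False :=
  not_conS_of_both (prvFrom_of_mem h1) (prvFrom_of_mem h2) h.1

lemma not_mem_iff (h : MaxCon Γ) {ψ : Fml K G N} : (Fml.not ψ) ∈ Γ ↔ ψ ∉ Γ := by
  constructor
  · exact fun h2 h1 => h.not_both h1 h2
  · intro h1
    rcases h.mem_or_neg ψ with h2 | h2
    · exact absurd h2 h1
    · exact h2

lemma and_mem_iff (h : MaxCon Γ) {φ ψ : Fml K G N} :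
    (Fml.and φ ψ) ∈ Γ ↔ (φ ∈ Γ ∧ ψ ∈ Γ) := by
  constructor
  · intro h1
    exact ⟨h.mp_prv (PrvFin.taut (taut_andl φ ψ)) h1, h.mp_prv (PrvFin.taut (taut_andr φ ψ)) h1⟩
  · rintro ⟨h1, h2⟩
    exact h.mem_of_prvFrom (prvFrom_mp2 (prvFrom_of_mem h1) (prvFrom_of_mem h2) (taut_andi φ ψ))

lemma imp_mem_iff (h : MaxCon Γ) {φ ψ : Fml K G N} :
    (φ.imp ψ) ∈ Γ ↔ (φ ∈ Γ → ψ ∈ Γ) := by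
  constructor
  · exact fun h1 h2 => h.mp h1 h2
  · intro h1
    by_cases hφ : φ ∈ Γ
    · exact h.mp_prv (PrvFin.taut (taut_K' ψ φ)) (h1 hφ)
    · have h2 : (Fml.not φ) ∈ Γ := h.not_mem_iff.2 hφ
      refine h.mp_prv (PrvFin.taut ?_) h2
      intro v; simp only [Fml.imp, evalB_not, evalB_and]
      cases evalB v φ <;> cases evalB v ψ <;> rfl

lemma or_mem_iff (h : MaxCon Γ) {φ ψ : Fml K G N} :
    (Fml.or φ ψ) ∈ Γ ↔ (φ ∈ Γ ∨ ψ ∈ Γ) := by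
  rw [Fml.or, h.not_mem_iff, h.and_mem_iff, h.not_mem_iff, h.not_mem_iff]
  tauto

lemma iff_mem_iff (h : MaxCon Γ) {φ ψ : Fml K G N} :
    (Fml.iff φ ψ) ∈ Γ ↔ (φ ∈ Γ ↔ ψ ∈ Γ) := by
  rw [Fml.iff, h.and_mem_iff, h.imp_mem_iff, h.imp_mem_iff]
  tauto

lemma bigOr_mem (h : MaxCon Γ) {φ : Fml K G N} {L : List (Fml K G N)}
    (hm : bigOr φ L ∈ Γ) : φ ∈ Γ ∨ ∃ ψ ∈ L, ψ ∈ Γ := by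
  induction L generalizing φ with
  | nil => exact Or.inl hm
  | cons ψ L ih =>
      rcases h.or_mem_iff.1 hm with h1 | h1
      · exact Or.inl h1
      · rcases ih h1 with h2 | ⟨χ, hχ, h2⟩
        · exact Or.inr ⟨ψ, List.mem_cons_self, h2⟩
        · exact Or.inr ⟨χ, List.mem_cons_of_mem ψ hχ, h2⟩

lemma disjOver_mem (h : MaxCon Γ) {f : K → Fml K G N} {k₀ : K} {L : List K}
    (hm : disjOver f k₀ L ∈ Γ) : ∃ k ∈ k₀ :: L, f k ∈ Γ := by
  rcases h.bigOr_mem hm with h1 | ⟨ψ, hψ, h1⟩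
  · exact ⟨k₀, List.mem_cons_self, h1⟩
  · obtain ⟨k, hk, rfl⟩ := List.mem_map.1 hψ
    exact ⟨k, List.mem_cons_of_mem k₀ hk, h1⟩

end MaxCon
end MaxConProps
section Soundness
open Classical
variable {K G N : Type*}

@[simp] lemma interp_key (w : World K G N) (l k) (k' : K) :
    interp w l (.key k') k = {k'} := rfl
@[simp] lemma interp_glob (w : World K G N) (l k) (g : G) :
    interp w l (.glob g) k = w.beta g := rfl
@[simp] lemma interp_loc (w : World K G N) (l k) (n : N) :
    interp w l (.loc n) k = l k n := rfl
@[simp] lemma interp_s (w : World K G N) (l k) (p q : PExp K G N) :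
    interp w l (p.s q) k = ⋃ k' ∈ interp w l p k, interp w l q k' := rfl

lemma interp_global {w : World K G N} {l} {g : PExp K G N} (hg : IsGlobalId g) (k k' : K) :
    interp w l g k = interp w l g k' := by
  cases g with
  | key k'' => rfl
  | glob g => rfl
  | loc n => exact absurd hg (by simp [IsGlobalId])
  | s p q => exact absurd hg (by simp [IsGlobalId])

lemma evalB_decide (w : World K G N) (l k) :
    ∀ ψ : Fml K G N, (evalB (fun χ => decide (Sat w l k χ)) ψ = true ↔ Sat w l k ψ) := by
  intro ψ
  induction ψ with
  | bdto p q => simp [evalB_bdto]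
  | cert k' χ _ =>
      simp [evalB_cert, Sat]
      exact ⟨@of_decide_eq_true _ _, @decide_eq_true _ _⟩
  | not χ ih =>
      simp only [evalB_not, Bool.not_eq_true', sat_not]
      rw [← ih]
      simp
  | and χ₁ χ₂ ih₁ ih₂ => simp [evalB_and, ih₁, ih₂]

lemma sat_of_taut {w : World K G N} {l k} {ψ : Fml K G N} (h : Tautology ψ) :
    Sat w l k ψ :=
  (evalB_decide w l k ψ).1 (h _)

lemma sat_bigOr {w : World K G N} {l k} {φ : Fml K G N} {L : List (Fml K G N)} :
    Sat w l k (bigOr φ L) ↔ Sat w l k φ ∨ ∃ ψ ∈ L, Sat w l k ψ := by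
  induction L generalizing φ with
  | nil => simp [bigOr]
  | cons ψ L ih =>
      simp only [bigOr, sat_or, ih]
      constructor
      · rintro (h | h | ⟨χ, hχ, h⟩)
        · exact Or.inl h
        · exact Or.inr ⟨ψ, List.mem_cons_self, h⟩
        · exact Or.inr ⟨χ, List.mem_cons_of_mem ψ hχ, h⟩
      · rintro (h | ⟨χ, hχ, h⟩)
        · exact Or.inl h
        · rcases List.mem_cons.1 hχ with rfl | hχ
          · exact Or.inr (Or.inl h)
          · exact Or.inr (Or.inr ⟨χ, hχ, h⟩)

lemma sat_disjOver {w : World K G N} {l k} {f : K → Fml K G N} {k₀ : K} {L : List K} :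
    Sat w l k (disjOver f k₀ L) ↔ ∃ k' ∈ k₀ :: L, Sat w l k (f k') := by
  simp only [disjOver, sat_bigOr]
  constructor
  · rintro (h | ⟨ψ, hψ, h⟩)
    · exact ⟨k₀, List.mem_cons_self, h⟩
    · obtain ⟨k', hk', rfl⟩ := List.mem_map.1 hψ
      exact ⟨k', List.mem_cons_of_mem k₀ hk', h⟩
  · rintro ⟨k', hk', h⟩
    rcases List.mem_cons.1 hk' with rfl | hk'
    · exact Or.inl h
    · exact Or.inr ⟨f k', List.mem_map.2 ⟨k', hk', rfl⟩, h⟩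

/-- Soundness of `AX_fin` with respect to the open semantics. -/
lemma prvFin_sound {φ : Fml K G N} (h : PrvFin φ) :
    ∀ (w : World K G N) (l : K → N → Set K) (k : K), Consistent w l → Sat w l k φ := by
  induction h with
  | @taut ψ ht => exact fun w l k _ => sat_of_taut ht
  | refl p => exact fun w l k _ => subset_rfl
  | trans p q r =>
      intro w l k _
      simp only [sat_imp, sat_bdto]
      exact fun h1 h2 => h2.trans h1
  | leftMono p q r =>
      intro w l k _
      simp only [sat_imp, sat_bdto, interp_s]
      intro h1
      exact Set.biUnion_subset_biUnion_left h1
  | assoc₁ p q r =>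
      intro w l k _
      simp only [sat_bdto, interp_s]
      intro x hx
      simp only [Set.mem_iUnion] at hx ⊢
      obtain ⟨a, ha, b, hb, hx⟩ := hx
      exact ⟨b, ⟨a, ha, hb⟩, hx⟩
  | assoc₂ p q r =>
      intro w l k _
      simp only [sat_bdto, interp_s]
      intro x hx
      simp only [Set.mem_iUnion] at hx ⊢
      obtain ⟨b, ⟨a, ha, hb⟩, hx⟩ := hx
      exact ⟨a, ha, b, hb, hx⟩
  | keyGlob k' g hg =>
      intro w l k _
      simp only [sat_bdto, interp_s, interp_key]
      intro x hx
      simp only [Set.mem_iUnion]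
      exact ⟨k', rfl, by rwa [interp_global hg k' k]⟩
  | glob p k' g hg =>
      intro w l k _
      simp only [sat_imp, sat_bdto, interp_s, interp_key]
      intro h1 x hx
      have hk' : k' ∈ ⋃ a ∈ interp w l p k, ({k'} : Set K) := h1 rfl
      simp only [Set.mem_iUnion] at hk'
      obtain ⟨a, ha, _⟩ := hk'
      simp only [Set.mem_iUnion]
      exact ⟨a, ha, by rwa [interp_global hg a k]⟩
  | convGlob p g hg =>
      intro w l k _
      simp only [sat_bdto, interp_s]
      intro x hx
      simp only [Set.mem_iUnion] at hx
      obtain ⟨a, _, hx⟩ := hx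
      rwa [interp_global hg a k] at hx
  | keyLink k' n r =>
      intro w l k hcon
      simp only [sat_imp, sat_cert, sat_bdto, interp_s, interp_key, interp_loc]
      intro h1
      have h2 := hcon k' n r h1
      simp only [sat_bdto, interp_loc] at h2
      intro x hx
      simp only [Set.mem_iUnion] at hx ⊢
      obtain ⟨a, rfl, hx⟩ := hx
      exact ⟨a, rfl, h2 hx⟩
  | nonempA p k₁ k' =>
      intro w l k _
      simp only [sat_imp, sat_bdto, interp_s, interp_key]
      intro h1 x hx
      simp only [Set.mem_iUnion]
      exact ⟨k₁, h1 rfl, hx⟩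
  | nonempB p q k' =>
      intro w l k _
      simp only [sat_imp, sat_not, sat_bdto, interp_s]
      intro h1 x hx
      obtain ⟨y, hy, _⟩ := Set.not_subset.1 h1
      simp only [Set.mem_iUnion]
      exact ⟨y, hy, hx⟩
  | nonempC p q k₁ k' =>
      intro w l k _
      simp only [sat_imp, sat_bdto, interp_s]
      intro h1 x hx
      have : k₁ ∈ ⋃ a ∈ interp w l p k, interp w l q a := h1 rfl
      simp only [Set.mem_iUnion] at this ⊢
      obtain ⟨a, ha, _⟩ := this
      exact ⟨a, ha, hx⟩
  | nonempD p k' k'' =>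
      intro w l k _
      simp only [sat_imp, sat_and, sat_bdto, interp_s, interp_key]
      rintro ⟨h1, h2⟩ x hx
      have : k' ∈ ⋃ a ∈ interp w l p k, ({k'} : Set K) := h1 rfl
      simp only [Set.mem_iUnion] at this
      obtain ⟨a, ha, _⟩ := this
      have := h2 ha
      simp only [Set.mem_singleton_iff] at this hx
      subst this; subst hx
      exact ha
  | keyDist k₁ k₂ hne =>
      intro w l k _
      simp only [sat_not, sat_bdto, interp_key]
      intro h1
      exact hne (Set.singleton_subset_iff.1 h1).symm
  | witnesses₁ p q k₀ L hnd hall =>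
      intro w l k _
      simp only [sat_imp, sat_not, sat_bdto]
      intro h1
      obtain ⟨x, hxq, hxp⟩ := Set.not_subset.1 h1
      refine sat_disjOver.2 ⟨x, hall x, ?_⟩
      simp only [sat_and, sat_not, sat_bdto, interp_key, Set.singleton_subset_iff]
      exact ⟨fun hc => hxp hc, hxq⟩
  | witnesses₂ p q k₁ k₀ L hnd hall =>
      intro w l k _
      simp only [sat_imp, sat_bdto, interp_s, interp_key, Set.singleton_subset_iff]
      intro h1
      simp only [Set.mem_iUnion] at h1
      obtain ⟨a, ha, hk₁⟩ := h1
      refine sat_disjOver.2 ⟨a, hall a, ?_⟩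
      simp only [sat_and, sat_bdto, interp_key, interp_s, Set.singleton_subset_iff,
        Set.mem_iUnion]
      exact ⟨ha, a, rfl, hk₁⟩
  | currentPrincipal nsel lsel k₀ L hnd hall =>
      intro w l k _
      refine sat_disjOver.2 ⟨k, hall k, ?_⟩
      show Sat w l k (Fml.iff (.bdto (.loc (nsel k)) (.key (lsel k)))
        (.bdto ((PExp.key k).s (.loc (nsel k))) (.key (lsel k))))
      simp only [sat_iff, sat_bdto, interp_s, interp_key, interp_loc]
      constructor
      · intro h1 x hx
        simp only [Set.mem_iUnion]
        exact ⟨k, rfl, h1 hx⟩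
      · intro h1 x hx
        have := h1 hx
        simp only [Set.mem_iUnion] at this
        obtain ⟨a, rfl, h2⟩ := this
        exact h2
  | mp h1 h2 ih1 ih2 =>
      intro w l k hcon
      have := ih2 w l k hcon
      rw [sat_imp] at this
      exact this (ih1 w l k hcon)

end Soundness
section Canonical
open Classical
variable {K G N : Type*}

/-- Formulas appearing under a `cert` in a formula. -/
def certFmls : Fml K G N → Set (Fml K G N)
  | .bdto _ _ => ∅
  | .cert _ ψ => insert ψ (certFmls ψ)
  | .not ψ => certFmls ψ
  | .and ψ χ => certFmls ψ ∪ certFmls χ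

lemma certFmls_finite (φ : Fml K G N) : (certFmls φ).Finite := by
  induction φ with
  | bdto p q => exact Set.finite_empty
  | cert k ψ ih => exact ih.insert ψ
  | not ψ ih => exact ih
  | and ψ χ ih₁ ih₂ => exact ih₁.union ih₂

variable [Nonempty K]

/-- The canonical world determined by a maximal consistent set and a target formula. -/
noncomputable def canonW (Γ : Set (Fml K G N)) (φ₀ : Fml K G N) : World K G N where
  beta g := {k' | (Fml.bdto (.glob g) (.key k')) ∈ Γ}
  certs k := {ψ | ψ ∈ certFmls φ₀ ∧ Fml.cert k ψ ∈ Γ}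
  finite_certs := by
    refine (certFmls_finite φ₀).subset ?_
    intro x hx
    simp only [Set.mem_iUnion, Set.mem_setOf_eq] at hx
    exact hx.choose_spec.1

/-- The canonical local name assignment. -/
def canonL (Γ : Set (Fml K G N)) : K → N → Set K :=
  fun k n => {k' | (Fml.bdto ((PExp.key k).s (.loc n)) (.key k')) ∈ Γ}

section GammaFacts
variable {Γ : Set (Fml K G N)}

lemma MaxCon.transΓ (hΓ : MaxCon Γ) {p q r : PExp K G N}
    (h1 : (Fml.bdto p q) ∈ Γ) (h2 : (Fml.bdto q r) ∈ Γ) : (Fml.bdto p r) ∈ Γ :=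
  hΓ.mp (hΓ.mp (hΓ.mem_of_prv (PrvFin.trans p q r)) h1) h2

lemma MaxCon.key_eq (hΓ : MaxCon Γ) {k' k'' : K} (h : (Fml.bdto (.key k'') (.key k')) ∈ Γ) : k' = k'' := by
  by_contra hne
  exact hΓ.not_both h (hΓ.mem_of_prv (PrvFin.keyDist k'' k' (fun h' => hne h'.symm)))

lemma MaxCon.keyS_iff (hΓ : MaxCon Γ) {k k' k'' : K} :
    (Fml.bdto ((PExp.key k).s (.key k'')) (.key k')) ∈ Γ ↔ k' = k'' := by
  constructor
  · intro h
    have h1 : (Fml.bdto (.key k'') ((PExp.key k).s (.key k''))) ∈ Γ :=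
      hΓ.mem_of_prv (PrvFin.convGlob (.key k) (.key k'') trivial)
    exact hΓ.key_eq (hΓ.transΓ h1 h)
  · rintro rfl
    exact hΓ.mem_of_prv (PrvFin.keyGlob k (.key k') trivial)

lemma MaxCon.globS_iff (hΓ : MaxCon Γ) {k k' : K} {g : G} :
    (Fml.bdto ((PExp.key k).s (.glob g)) (.key k')) ∈ Γ ↔
      (Fml.bdto (.glob g) (.key k')) ∈ Γ := by
  constructor
  · intro h
    have h1 : (Fml.bdto (.glob g) ((PExp.key k).s (.glob g))) ∈ Γ :=
      hΓ.mem_of_prv (PrvFin.convGlob (.key k) (.glob g) trivial)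
    exact hΓ.transΓ h1 h
  · intro h
    have h1 : (Fml.bdto ((PExp.key k).s (.glob g)) (.glob g)) ∈ Γ :=
      hΓ.mem_of_prv (PrvFin.keyGlob k (.glob g) trivial)
    exact hΓ.transΓ h1 h

variable [Finite K]

lemma keyEnum (K : Type*) [Finite K] [Nonempty K] :
    ∃ (k₀ : K) (L : List K), (k₀ :: L).Nodup ∧ ∀ k : K, k ∈ k₀ :: L := by
  haveI := Fintype.ofFinite K
  obtain ⟨k₀, L, hL⟩ : ∃ k₀ L, Finset.univ.toList = k₀ :: L := by
    cases h : Finset.univ.toList (α := K) with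
    | nil =>
        exfalso
        have := Finset.mem_toList.2 (Finset.mem_univ (Classical.arbitrary K))
        rw [h] at this
        exact List.not_mem_nil this
    | cons a l => exact ⟨a, l, h⟩
  refine ⟨k₀, L, ?_, ?_⟩
  · rw [← hL]; exact Finset.nodup_toList _
  · intro k
    rw [← hL]
    exact Finset.mem_toList.2 (Finset.mem_univ k)

lemma MaxCon.witnesses₂Γ (hΓ : MaxCon Γ) {p q : PExp K G N} {k₁ : K}
    (h : (Fml.bdto (p.s q) (.key k₁)) ∈ Γ) :
    ∃ k, (Fml.bdto p (.key k)) ∈ Γ ∧ (Fml.bdto ((PExp.key k).s q) (.key k₁)) ∈ Γ := by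
  obtain ⟨k₀, L, hnd, hall⟩ := keyEnum K
  have hax := hΓ.mem_of_prv (PrvFin.witnesses₂ p q k₁ k₀ L hnd hall)
  obtain ⟨k, _, hk⟩ := hΓ.disjOver_mem (hΓ.mp hax h)
  exact ⟨k, (hΓ.and_mem_iff.1 hk).1, (hΓ.and_mem_iff.1 hk).2⟩

lemma MaxCon.witnesses₁Γ (hΓ : MaxCon Γ) {p q : PExp K G N}
    (h : (Fml.bdto p q) ∉ Γ) :
    ∃ k, (Fml.bdto p (.key k)) ∉ Γ ∧ (Fml.bdto q (.key k)) ∈ Γ := by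
  obtain ⟨k₀, L, hnd, hall⟩ := keyEnum K
  have hax := hΓ.mem_of_prv (PrvFin.witnesses₁ p q k₀ L hnd hall)
  have hn : (Fml.not (.bdto p q)) ∈ Γ := hΓ.not_mem_iff.2 h
  obtain ⟨k, _, hk⟩ := hΓ.disjOver_mem (hΓ.mp hax hn)
  exact ⟨k, hΓ.not_mem_iff.1 (hΓ.and_mem_iff.1 hk).1, (hΓ.and_mem_iff.1 hk).2⟩

lemma MaxCon.comp (hΓ : MaxCon Γ) {p q : PExp K G N} {k k' k'' : K}
    (h1 : (Fml.bdto ((PExp.key k).s p) (.key k'')) ∈ Γ)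
    (h2 : (Fml.bdto ((PExp.key k'').s q) (.key k')) ∈ Γ) :
    (Fml.bdto ((PExp.key k).s (p.s q)) (.key k')) ∈ Γ := by
  have h3 : (Fml.bdto (((PExp.key k).s p).s q) ((PExp.key k'').s q)) ∈ Γ :=
    hΓ.mp (hΓ.mem_of_prv (PrvFin.leftMono ((PExp.key k).s p) (.key k'') q)) h1
  have h4 : (Fml.bdto (((PExp.key k).s p).s q) (.key k')) ∈ Γ := hΓ.transΓ h3 h2
  have h5 : (Fml.bdto ((PExp.key k).s (p.s q)) (((PExp.key k).s p).s q)) ∈ Γ :=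
    hΓ.mem_of_prv (PrvFin.assoc₂ (.key k) p q)
  exact hΓ.transΓ h5 h4

lemma MaxCon.decomp (hΓ : MaxCon Γ) {p q : PExp K G N} {k k' : K}
    (h : (Fml.bdto ((PExp.key k).s (p.s q)) (.key k')) ∈ Γ) :
    ∃ k'', (Fml.bdto ((PExp.key k).s p) (.key k'')) ∈ Γ ∧
      (Fml.bdto ((PExp.key k'').s q) (.key k')) ∈ Γ := by
  have h1 : (Fml.bdto (((PExp.key k).s p).s q) ((PExp.key k).s (p.s q))) ∈ Γ :=
    hΓ.mem_of_prv (PrvFin.assoc₁ (.key k) p q)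
  exact hΓ.witnesses₂Γ (hΓ.transΓ h1 h)

/-- Truth lemma for principal expressions. -/
lemma MaxCon.interp_eq (hΓ : MaxCon Γ) (φ₀ : Fml K G N) :
    ∀ (p : PExp K G N) (k : K),
      interp (canonW Γ φ₀) (canonL Γ) p k =
        {k' | (Fml.bdto ((PExp.key k).s p) (.key k')) ∈ Γ} := by
  intro p
  induction p with
  | key k'' =>
      intro k
      ext k'
      simp only [interp_key, Set.mem_singleton_iff, Set.mem_setOf_eq, hΓ.keyS_iff]
  | glob g =>
      intro k
      ext k'
      simp only [interp_glob, canonW, Set.mem_setOf_eq, hΓ.globS_iff]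
  | loc n => intro k; rfl
  | s p q ihp ihq =>
      intro k
      ext k'
      simp only [interp_s, Set.mem_iUnion, Set.mem_setOf_eq, ihp, ihq]
      constructor
      · rintro ⟨k'', h1, h2⟩
        exact hΓ.comp h1 h2
      · intro h
        obtain ⟨k'', h1, h2⟩ := hΓ.decomp h
        exact ⟨k'', h1, h2⟩

/-- The canonical local name assignment is consistent with the canonical world. -/
lemma MaxCon.canon_consistent (hΓ : MaxCon Γ) (φ₀ : Fml K G N) :
    Consistent (canonW Γ φ₀) (canonL Γ) := by
  intro k n p hc
  simp only [canonW, Set.mem_setOf_eq] at hc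
  have hcert : (Fml.cert k (.bdto (.loc n) p)) ∈ Γ := hc.2
  have hlink : (Fml.bdto ((PExp.key k).s (.loc n)) ((PExp.key k).s p)) ∈ Γ :=
    hΓ.mp (hΓ.mem_of_prv (PrvFin.keyLink k n p)) hcert
  simp only [sat_bdto, interp_loc, hΓ.interp_eq φ₀ p k]
  intro k' hk'
  simp only [Set.mem_setOf_eq] at hk'
  exact hΓ.transΓ hlink hk'

/-- Existence of a current-principal key. -/
lemma MaxCon.current_principal (hΓ : MaxCon Γ) :
    ∃ kstar : K, ∀ (n : N) (k' : K),
      (Fml.bdto (.loc n) (.key k')) ∈ Γ ↔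
        (Fml.bdto ((PExp.key kstar).s (.loc n)) (.key k')) ∈ Γ := by
  by_contra hno
  have hsel : ∀ k : K, ∃ (n : N) (k' : K),
      ¬ ((Fml.bdto (.loc n) (.key k')) ∈ Γ ↔
        (Fml.bdto ((PExp.key k).s (.loc n)) (.key k')) ∈ Γ) := by
    intro k
    by_contra hk
    push_neg at hk
    exact hno ⟨k, hk⟩
  choose nsel lsel hbad using hsel
  obtain ⟨k₀, L, hnd, hall⟩ := keyEnum K
  have hax := hΓ.mem_of_prv (PrvFin.currentPrincipal nsel lsel k₀ L hnd hall)
  obtain ⟨k, _, hk⟩ := hΓ.disjOver_mem hax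
  exact hbad k (hΓ.iff_mem_iff.1 hk)

end GammaFacts
end Canonical
section Completeness
open Classical
variable {K G N : Type*} [Nonempty K] [Finite K] {Γ : Set (Fml K G N)}

lemma MaxCon.harmony (hΓ : MaxCon Γ) {kstar : K}
    (hks : ∀ (n : N) (k' : K), (Fml.bdto (.loc n) (.key k')) ∈ Γ ↔
      (Fml.bdto ((PExp.key kstar).s (.loc n)) (.key k')) ∈ Γ) :
    ∀ (p : PExp K G N) (k' : K),
      (Fml.bdto p (.key k')) ∈ Γ ↔
        (Fml.bdto ((PExp.key kstar).s p) (.key k')) ∈ Γ := by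
  intro p
  induction p with
  | key k'' =>
      intro k'
      rw [hΓ.keyS_iff]
      constructor
      · exact fun h => hΓ.key_eq h
      · rintro rfl
        exact hΓ.mem_of_prv (PrvFin.refl (.key k'))
  | glob g => exact fun k' => (hΓ.globS_iff).symm
  | loc n => exact fun k' => hks n k'
  | s p q ihp ihq =>
      intro k'
      constructor
      · intro h
        obtain ⟨k'', h1, h2⟩ := hΓ.witnesses₂Γ h
        exact hΓ.comp ((ihp k'').1 h1) h2
      · intro h
        obtain ⟨k'', h1, h2⟩ := hΓ.decomp h
        have h1' : (Fml.bdto p (.key k'')) ∈ Γ := (ihp k'').2 h1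
        have h3 : (Fml.bdto (p.s q) ((PExp.key k'').s q)) ∈ Γ :=
          hΓ.mp (hΓ.mem_of_prv (PrvFin.leftMono p (.key k'') q)) h1'
        exact hΓ.transΓ h3 h2

lemma MaxCon.truth (hΓ : MaxCon Γ) {kstar : K}
    (hks : ∀ (n : N) (k' : K), (Fml.bdto (.loc n) (.key k')) ∈ Γ ↔
      (Fml.bdto ((PExp.key kstar).s (.loc n)) (.key k')) ∈ Γ)
    (φ₀ : Fml K G N) :
    ∀ χ : Fml K G N, certFmls χ ⊆ certFmls φ₀ →
      (Sat (canonW Γ φ₀) (canonL Γ) kstar χ ↔ χ ∈ Γ) := by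
  intro χ
  induction χ with
  | bdto p q =>
      intro _
      rw [sat_bdto, hΓ.interp_eq φ₀ p kstar, hΓ.interp_eq φ₀ q kstar]
      constructor
      · intro hsub
        by_contra hpq
        obtain ⟨k', hnp, hq⟩ := hΓ.witnesses₁Γ hpq
        have : (Fml.bdto ((PExp.key kstar).s q) (.key k')) ∈ Γ := (hΓ.harmony hks q k').1 hq
        have := hsub this
        simp only [Set.mem_setOf_eq] at this
        exact hnp ((hΓ.harmony hks p k').2 this)
      · intro hpq k' hk'
        simp only [Set.mem_setOf_eq] at hk' ⊢
        have hq : (Fml.bdto q (.key k')) ∈ Γ := (hΓ.harmony hks q k').2 hk'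
        exact (hΓ.harmony hks p k').1 (hΓ.transΓ hpq hq)
  | cert k ψ ih =>
      intro hsub
      have hψ : ψ ∈ certFmls φ₀ := hsub (by simp [certFmls])
      rw [sat_cert]
      show ψ ∈ {ψ' | ψ' ∈ certFmls φ₀ ∧ Fml.cert k ψ' ∈ Γ} ↔ _
      simp only [Set.mem_setOf_eq]
      exact ⟨fun h => h.2, fun h => ⟨hψ, h⟩⟩
  | not ψ ih =>
      intro hsub
      rw [sat_not, ih hsub, ← hΓ.not_mem_iff]
  | and ψ χ ihψ ihχ =>
      intro hsub
      have h1 : certFmls ψ ⊆ certFmls φ₀ := fun x hx => hsub (Set.mem_union_left _ hx)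
      have h2 : certFmls χ ⊆ certFmls φ₀ := fun x hx => hsub (Set.mem_union_right _ hx)
      rw [sat_and, ihψ h1, ihχ h2, hΓ.and_mem_iff]

lemma prvFin_of_prvFrom_empty {ψ : Fml K G N} (h : PrvFrom (∅ : Set (Fml K G N)) ψ) :
    PrvFin ψ := by
  obtain ⟨L, hL, hp⟩ := h
  cases L with
  | nil => exact hp
  | cons a L => exact absurd (hL a (List.mem_cons_self)) (Set.notMem_empty a)

/-- Completeness of `AX_fin`. -/
lemma prvFin_complete {φ : Fml K G N} (h : OValid φ) : PrvFin φ := by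
  by_contra hn
  -- ¬φ is consistent
  have hcon : ConS {Fml.not φ} := by
    intro hf
    have hf' : PrvFrom (insert (Fml.not φ) (∅ : Set (Fml K G N))) falsum := by
      simpa using hf
    have h1 : PrvFin ((Fml.not φ).imp falsum) := prvFin_of_prvFrom_empty (deduction hf')
    have h2 : PrvFin ((Fml.not (falsum : Fml K G N)).imp φ) := h1.mp1 (taut_negimp φ falsum)
    exact hn (prv_not_falsum.mp h2)
  obtain ⟨Γ, hsub, hΓ⟩ := lindenbaum hcon
  have hnφ : (Fml.not φ) ∈ Γ := hsub rfl
  obtain ⟨kstar, hks⟩ := hΓ.current_principal (N := N)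
  have htruth := hΓ.truth hks φ (.not φ) (by rw [show certFmls (Fml.not φ) = certFmls φ from rfl])
  have hsat : Sat (canonW Γ φ) (canonL Γ) kstar (.not φ) := htruth.2 hnφ
  exact h ⟨canonW Γ φ, canonL Γ, kstar, hsat, hΓ.canon_consistent φ⟩

end Completeness
/-- Theorem 3.2, finite case: if `K` is finite, `AX_fin` is sound
and complete for LLNC with respect to the open semantics. -/
theorem axFin_sound_complete [Finite K] [Nonempty K] (φ : Fml K G N) :
    PrvFin φ ↔ OValid φ := by
  constructor
  · intro h
    rintro ⟨w, l, k, ho⟩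
    have ho' : Sat w l k (.not φ) ∧ Consistent w l := ho
    exact ho'.1 (prvFin_sound h w l k ho'.2)
  · exact prvFin_complete
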